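/- In the model (3.6)–(3.11), the square solution with |a_x|² = |a_y|² = μ/(2+β), c_x = c_y = d_x = d_y = 0 loses stability in a pitchfork bifurcation of the shear modes exactly when μ = (1+Q)(2+β): the 2×2 linearization matrix [[|a|² - 1, -Q],[ζ, -ζ]] of the (c_x, d_x) subsystem about the square state has a zero eigenvalue iff μ = (1+Q)(2+β), and has a pair of purely imaginary eigenvalues iff μ = (1+ζ)(2+β) and Q > ζ. -/

import Mathlib

open Complex Matrix

/-- Linearization of the shear subsystem `(cx, dx)` about the square state
`|a|² = μ/(2+β)` in the model (3.6)–(3.11). -/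
noncomputable def shearMatrix (μ β Q ζ : ℝ) : Matrix (Fin 2) (Fin 2) ℝ :=
  !![μ / (2 + β) - 1, -Q; ζ, -ζ]

/-- The square state of the model loses stability in a pitchfork bifurcation of the
shear modes exactly when `μ = (1+Q)(2+β)`: the linearization of the `(cx, dx)`
subsystem has a zero eigenvalue iff `μ = (1+Q)(2+β)`, and a pair of purely imaginary
eigenvalues iff `μ = (1+ζ)(2+β)` and `Q > ζ`. -/
theorem stmt_19 (μ β Q ζ : ℝ) (hβ : 0 < 2 + β) (hζ : 0 < ζ) (hQ : 0 < Q) :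
    ((∃ x : Fin 2 → ℝ, x ≠ 0 ∧ (shearMatrix μ β Q ζ).mulVec x = 0) ↔
      μ = (1 + Q) * (2 + β)) ∧
    ((∃ b : ℝ, b ≠ 0 ∧ ∃ x : Fin 2 → ℂ, x ≠ 0 ∧
        ((shearMatrix μ β Q ζ).map (fun r : ℝ => (r : ℂ))).mulVec x
          = (Complex.I * (b : ℂ)) • x) ↔
      (μ = (1 + ζ) * (2 + β) ∧ Q > ζ)) := by
  have hβ' : (2 + β) ≠ 0 := ne_of_gt hβ
  constructor
  · constructor
    · rintro ⟨x, hx, h⟩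
      have h0 := congrFun h 0
      have h1 := congrFun h 1
      simp [shearMatrix, Matrix.mulVec, dotProduct, Fin.sum_univ_two] at h0 h1
      have hxx : x 0 = x 1 :=
        mul_left_cancel₀ (ne_of_gt hζ) (by linarith : ζ * x 0 = ζ * x 1)
      have hx0 : x 0 ≠ 0 := by
        intro h00
        apply hx
        funext i
        fin_cases i
        · exact h00
        · exact hxx ▸ h00
      have key : (μ / (2 + β) - 1 - Q) * x 0 = 0 := by rw [hxx] at h0 ⊢; linarith
      have := (mul_eq_zero.mp key).resolve_right hx0
      field_simp at this ⊢
      linarith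
    · intro hμ
      refine ⟨fun _ => 1, ?_, ?_⟩
      · intro h; simpa using congrFun h 0
      · funext i
        fin_cases i <;>
          simp [shearMatrix, Matrix.mulVec, dotProduct, Fin.sum_univ_two, hμ] <;>
          field_simp <;> ring
  · constructor
    · rintro ⟨b, hb, x, hx, h⟩
      have h0 := congrFun h 0
      have h1 := congrFun h 1
      simp [shearMatrix, Matrix.mulVec, dotProduct, Fin.sum_univ_two] at h0 h1
      have hζc : (ζ : ℂ) ≠ 0 := by exact_mod_cast ne_of_gt hζ
      have hx1 : x 1 ≠ 0 := by
        intro h11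
        have hx0 : x 0 = 0 := by
          rw [h11] at h1
          field_simp at h1
          simpa [hζc] using h1
        apply hx; funext i; fin_cases i
        · exact hx0
        · exact h11
      have hx0eq : (ζ : ℂ) * x 0 = ((ζ : ℂ) + I * b) * x 1 := by
        linear_combination h1
      have key : ((μ / (2 + β) - 1 : ℝ) : ℂ) * ((ζ : ℂ) + I * b) - Q * ζ
          = I * b * ((ζ : ℂ) + I * b) := by
        have h0' : ((μ / (2 + β) - 1 : ℝ) : ℂ) * (ζ * x 0) - Q * (ζ * x 1)
            = I * b * (ζ * x 0) := by push_cast; linear_combination (ζ : ℂ) * h0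
        rw [hx0eq] at h0'
        exact mul_right_cancel₀ hx1 (by linear_combination h0' :
          (((μ / (2 + β) - 1 : ℝ) : ℂ) * ((ζ : ℂ) + I * b) - Q * ζ) * x 1
            = (I * b * ((ζ : ℂ) + I * b)) * x 1)
      set a : ℝ := μ / (2 + β) - 1 with ha
      have key2 : ((a * ζ - Q * ζ + b * b : ℝ) : ℂ) + ((a * b - ζ * b : ℝ) : ℂ) * I = 0 := by
        push_cast
        linear_combination key + (b:ℂ) * (b:ℂ) * Complex.I_mul_I
      rw [Complex.ext_iff] at key2
      simp at key2
      obtain ⟨kre, kim⟩ := key2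
      have haζ : a = ζ := by
        rcases mul_eq_zero.mp (by linarith : (a - ζ) * b = 0) with h' | h'
        · linarith
        · exact absurd h' hb
      constructor
      · have h2 : μ / (2 + β) - 1 = ζ := haζ
        field_simp at h2
        linarith [h2]
      · nlinarith [mul_self_pos.mpr hb]
    · rintro ⟨hμ, hQζ⟩
      have haζ : μ / (2 + β) - 1 = ζ := by rw [hμ]; field_simp; ring
      refine ⟨Real.sqrt (ζ * (Q - ζ)), ne_of_gt (Real.sqrt_pos.mpr (by nlinarith)), ?_⟩
      set b : ℝ := Real.sqrt (ζ * (Q - ζ)) with hbdef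
      have hb2 : b * b = ζ * (Q - ζ) := Real.mul_self_sqrt (by nlinarith)
      refine ⟨![(ζ : ℂ) + I * b, (ζ : ℂ)], ?_, ?_⟩
      · intro h
        have := congrFun h 1
        simp at this
        exact (ne_of_gt hζ) this
      · funext i
        fin_cases i <;>
          simp [shearMatrix, Matrix.mulVec, dotProduct, Fin.sum_univ_two, haζ]
        · have hc : (b : ℂ) * b = (ζ : ℂ) * (Q - ζ) := by exact_mod_cast hb2
          push_cast
          linear_combination hc - ((b:ℂ)*(b:ℂ))*Complex.I_mul_I
        · ring
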